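/- Let P ⊂ [0,1]^d be a finite set of cardinality n ≥ 1. Then there exists a point z ∈ [0,1]^d such that ‖z − x‖_2 ≥ √d/(5 n^(1/d)) for all x ∈ P. -/

import Mathlib

open MeasureTheory Real Finset Set
open scoped ENNReal

/-- The per-point bad-set measure bound (Chernoff / Gaussian integral argument):
the set of points of the unit cube at squared Euclidean distance `< d * s ^ 2`
from a fixed point `x` has volume at most `(exp 2⁻¹ * √(2 * π) * s) ^ d`. -/
theorem stmt_9_aux (d : ℕ) (s : ℝ) (hspos : 0 < s) (x : Fin d → ℝ) :
    (volume {z : Fin d → ℝ | (∀ i, z i ∈ Set.Icc (0:ℝ) 1) ∧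
        ∑ i, (z i - x i) ^ 2 < d * s ^ 2}) ≤
      ENNReal.ofReal ((Real.exp 2⁻¹ * Real.sqrt (2 * π) * s) ^ d) := by
  set l : ℝ := 1 / (2 * s ^ 2) with hl_def
  have hl : 0 < l := by positivity
  set g : Fin d → ℝ → ℝ := fun i =>
    Set.indicator (Set.Icc (0:ℝ) 1)
      (fun u => Real.exp (l * s ^ 2) * Real.exp (-l * (u - x i) ^ 2)) with hg_def
  have hg_int : ∀ i, Integrable (g i) := by
    intro i
    exact (((integrable_exp_neg_mul_sq hl).comp_sub_right (x i)).const_mul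
      (Real.exp (l * s ^ 2))).indicator measurableSet_Icc
  have hg_nonneg : ∀ i u, 0 ≤ g i u := by
    intro i u
    apply Set.indicator_nonneg
    intro u _
    positivity
  set F : (Fin d → ℝ) → ℝ := fun z => ∏ i, g i (z i) with hF_def
  have hF_int : Integrable F := Integrable.fintype_prod (f := g) hg_int
  have hF_nonneg : ∀ z, 0 ≤ F z := fun z => Finset.prod_nonneg fun i _ => hg_nonneg i (z i)
  -- the bad set is contained in the superlevel set {1 ≤ F}
  have hsubset : {z : Fin d → ℝ | (∀ i, z i ∈ Set.Icc (0:ℝ) 1) ∧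
      ∑ i, (z i - x i) ^ 2 < d * s ^ 2} ⊆ {z | 1 ≤ ENNReal.ofReal (F z)} := by
    rintro z ⟨hz, hzlt⟩
    have hFz : F z = Real.exp ((d : ℝ) * (l * s ^ 2) + ∑ i, -l * (z i - x i) ^ 2) := by
      have hgz : ∀ i ∈ Finset.univ, g i (z i)
          = Real.exp (l * s ^ 2) * Real.exp (-l * (z i - x i) ^ 2) := by
        intro i _
        exact Set.indicator_of_mem (hz i) _
      simp only [hF_def]
      rw [Finset.prod_congr rfl hgz, Finset.prod_mul_distrib, Finset.prod_const,
        ← Real.exp_sum, ← Real.exp_nat_mul, ← Real.exp_add, Finset.card_univ,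
        Fintype.card_fin]
    simp only [Set.mem_setOf_eq]
    rw [ENNReal.one_le_ofReal, hFz]
    apply Real.one_le_exp
    have hsum : ∑ i, -l * (z i - x i) ^ 2 = -(l * ∑ i, (z i - x i) ^ 2) := by
      rw [← Finset.mul_sum, neg_mul]
    rw [hsum]
    have : l * ∑ i, (z i - x i) ^ 2 ≤ l * ((d : ℝ) * s ^ 2) :=
      mul_le_mul_of_nonneg_left hzlt.le hl.le
    nlinarith [this]
  -- Markov's inequality
  have hmarkov : volume {z : Fin d → ℝ | 1 ≤ ENNReal.ofReal (F z)}
      ≤ ∫⁻ z, ENNReal.ofReal (F z) := by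
    have := mul_meas_ge_le_lintegral₀
      (f := fun z : Fin d → ℝ => ENNReal.ofReal (F z)) (μ := volume)
      (hF_int.aestronglyMeasurable.aemeasurable.ennreal_ofReal) 1
    simpa using this
  have hlint : ∫⁻ z, ENNReal.ofReal (F z) = ENNReal.ofReal (∫ z, F z) :=
    (ofReal_integral_eq_lintegral_ofReal hF_int (ae_of_all _ hF_nonneg)).symm
  -- compute / bound the integral
  have hgi_le : ∀ i, ∫ u, g i u ≤ Real.exp 2⁻¹ * Real.sqrt (2 * π) * s := by
    intro i
    have h1 : ∫ u, g i u
        = ∫ u in Set.Icc (0:ℝ) 1, Real.exp (l * s ^ 2) * Real.exp (-l * (u - x i) ^ 2) :=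
      integral_indicator measurableSet_Icc
    have h2 : (∫ u in Set.Icc (0:ℝ) 1, Real.exp (l * s ^ 2) * Real.exp (-l * (u - x i) ^ 2))
        ≤ ∫ u, Real.exp (l * s ^ 2) * Real.exp (-l * (u - x i) ^ 2) := by
      apply setIntegral_le_integral
        (((integrable_exp_neg_mul_sq hl).comp_sub_right (x i)).const_mul _)
      exact ae_of_all _ fun u => by positivity
    have h3 : (∫ u, Real.exp (l * s ^ 2) * Real.exp (-l * (u - x i) ^ 2))
        = Real.exp (l * s ^ 2) * Real.sqrt (π / l) := by
      rw [integral_const_mul]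
      congr 1
      rw [integral_sub_right_eq_self (fun u => Real.exp (-l * u ^ 2)) (x i)]
      exact integral_gaussian l
    have hls : l * s ^ 2 = 2⁻¹ := by
      rw [hl_def]; field_simp
    have hpl : π / l = 2 * π * s ^ 2 := by
      rw [hl_def]; field_simp
    have hsq : Real.sqrt (2 * π * s ^ 2) = Real.sqrt (2 * π) * s := by
      rw [Real.sqrt_mul (by positivity), Real.sqrt_sq hspos.le]
    rw [h1]
    calc (∫ u in Set.Icc (0:ℝ) 1, Real.exp (l * s ^ 2) * Real.exp (-l * (u - x i) ^ 2))
        ≤ ∫ u, Real.exp (l * s ^ 2) * Real.exp (-l * (u - x i) ^ 2) := h2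
      _ = Real.exp 2⁻¹ * Real.sqrt (2 * π) * s := by
          rw [h3, hls, hpl, hsq, mul_assoc]
  have hint_le : ∫ z, F z ≤ (Real.exp 2⁻¹ * Real.sqrt (2 * π) * s) ^ d := by
    rw [hF_def]
    rw [MeasureTheory.volume_pi, MeasureTheory.integral_fintype_prod_eq_prod g]
    calc (∏ i, ∫ u, g i u)
        ≤ ∏ _i : Fin d, Real.exp 2⁻¹ * Real.sqrt (2 * π) * s := by
          apply Finset.prod_le_prod
          · intro i _
            exact integral_nonneg (hg_nonneg i)
          · intro i _
            exact hgi_le i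
      _ = (Real.exp 2⁻¹ * Real.sqrt (2 * π) * s) ^ d := by
          rw [Finset.prod_const, Finset.card_univ, Fintype.card_fin]
  calc volume {z : Fin d → ℝ | (∀ i, z i ∈ Set.Icc (0:ℝ) 1) ∧
        ∑ i, (z i - x i) ^ 2 < d * s ^ 2}
      ≤ volume {z : Fin d → ℝ | 1 ≤ ENNReal.ofReal (F z)} := measure_mono hsubset
    _ ≤ ∫⁻ z, ENNReal.ofReal (F z) := hmarkov
    _ = ENNReal.ofReal (∫ z, F z) := hlint
    _ ≤ ENNReal.ofReal ((Real.exp 2⁻¹ * Real.sqrt (2 * π) * s) ^ d) :=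
        ENNReal.ofReal_le_ofReal hint_le

/-- For any `n` points in `[0,1]^d` there is a point `z ∈ [0,1]^d` whose Euclidean
distance to all of them is at least `√d / (5 n^{1/d})`. -/
theorem stmt_9 (d n : ℕ) (hd : 1 ≤ d) (hn : 1 ≤ n)
    (P : Finset (EuclideanSpace ℝ (Fin d))) (hP : P.card = n)
    (hPcube : ∀ x ∈ P, ∀ i, x i ∈ Set.Icc (0 : ℝ) 1) :
    ∃ z : EuclideanSpace ℝ (Fin d), (∀ i, z i ∈ Set.Icc (0 : ℝ) 1) ∧
      ∀ x ∈ P, Real.sqrt d / (5 * (n : ℝ) ^ ((1 : ℝ) / d)) ≤ dist z x := by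
  have hnpos : (0:ℝ) < n := by exact_mod_cast hn
  have hdne : (d:ℝ) ≠ 0 := by positivity
  have hrpow_pos : (0:ℝ) < (n : ℝ) ^ ((1 : ℝ) / d) := Real.rpow_pos_of_pos hnpos _
  set s : ℝ := 1 / (5 * (n : ℝ) ^ ((1 : ℝ) / d)) with hs_def
  have hspos : 0 < s := by rw [hs_def]; positivity
  set a : ℝ := Real.exp 2⁻¹ * Real.sqrt (2 * π) with ha_def
  have ha_nonneg : 0 ≤ a := by rw [ha_def]; positivity
  -- numeric bound: a < 5
  have ha_lt : a < 5 := by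
    have h1 : a ^ 2 = Real.exp 1 * (2 * π) := by
      rw [ha_def, mul_pow, Real.sq_sqrt (by positivity), ← Real.exp_nat_mul]
      norm_num
    have h2 : a ^ 2 < 25 := by
      rw [h1]
      have hpi : π < 3.15 := by linarith [Real.pi_lt_d2]
      have he : Real.exp 1 < 2.72 := by linarith [Real.exp_one_lt_d9]
      have hp0 : 0 < π := Real.pi_pos
      have he0 : 0 < Real.exp 1 := Real.exp_pos 1
      nlinarith
    nlinarith [ha_nonneg]
  -- the union of bad sets has measure < 1
  set B : EuclideanSpace ℝ (Fin d) → Set (Fin d → ℝ) := fun x =>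
    {z : Fin d → ℝ | (∀ i, z i ∈ Set.Icc (0:ℝ) 1) ∧
      ∑ i, (z i - x i) ^ 2 < d * s ^ 2} with hB_def
  have hnd : ((n : ℝ) ^ ((1 : ℝ) / d)) ^ d = (n : ℝ) := by
    rw [← Real.rpow_natCast ((n : ℝ) ^ ((1 : ℝ) / d)) d, ← Real.rpow_mul hnpos.le,
      one_div, inv_mul_cancel₀ hdne, Real.rpow_one]
  have hsd : s ^ d = 1 / (5 ^ d * (n : ℝ)) := by
    rw [hs_def, div_pow, one_pow, mul_pow, hnd]
  have hs_pow : (n : ℝ) * (a * s) ^ d = (a / 5) ^ d := by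
    rw [mul_pow, hsd, div_pow]
    field_simp
  have hU_lt : volume (⋃ x ∈ P, B x) < 1 := by
    calc volume (⋃ x ∈ P, B x)
        ≤ ∑ x ∈ P, volume (B x) := measure_biUnion_finset_le P B
      _ ≤ ∑ x ∈ P, ENNReal.ofReal ((a * s) ^ d) := by
          apply Finset.sum_le_sum
          intro x _
          exact stmt_9_aux d s hspos (fun i => x i)
      _ = (n : ℝ≥0∞) * ENNReal.ofReal ((a * s) ^ d) := by
          rw [Finset.sum_const, hP, nsmul_eq_mul]
      _ = ENNReal.ofReal ((n : ℝ) * (a * s) ^ d) := by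
          rw [ENNReal.ofReal_mul (by positivity), ENNReal.ofReal_natCast]
      _ = ENNReal.ofReal ((a / 5) ^ d) := by rw [hs_pow]
      _ < 1 := by
          rw [ENNReal.ofReal_lt_one]
          apply pow_lt_one₀ (by positivity) (by linarith) (by omega)
  -- the cube has measure 1
  have hC : volume (Set.univ.pi fun _ : Fin d => Set.Icc (0:ℝ) 1) = 1 := by
    rw [volume_pi_pi]
    simp [Real.volume_Icc]
  -- find a good point
  have hdiff : volume ((Set.univ.pi fun _ : Fin d => Set.Icc (0:ℝ) 1) \ ⋃ x ∈ P, B x) ≠ 0 := by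
    intro h0
    have hle : volume (Set.univ.pi fun _ : Fin d => Set.Icc (0:ℝ) 1)
        ≤ volume ((Set.univ.pi fun _ : Fin d => Set.Icc (0:ℝ) 1) \ ⋃ x ∈ P, B x)
          + volume (⋃ x ∈ P, B x) := by
      refine le_trans (measure_mono ?_) (measure_union_le _ _)
      intro z hz
      by_cases h : z ∈ ⋃ x ∈ P, B x
      · exact Or.inr h
      · exact Or.inl ⟨hz, h⟩
    rw [hC, h0, zero_add] at hle
    exact absurd (lt_of_le_of_lt hle hU_lt) (lt_irrefl _)
  obtain ⟨z, hzC, hzU⟩ := nonempty_of_measure_ne_zero hdiff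
  have hz_mem : ∀ i, z i ∈ Set.Icc (0:ℝ) 1 := fun i => hzC i (Set.mem_univ i)
  refine ⟨(WithLp.equiv 2 (Fin d → ℝ)).symm z, ?_, ?_⟩
  · intro i
    exact hz_mem i
  · intro x hx
    have hzB : z ∉ B x := fun h => hzU (Set.mem_biUnion hx h)
    have hsum : (d : ℝ) * s ^ 2 ≤ ∑ i, (z i - x i) ^ 2 := by
      by_contra h
      exact hzB ⟨hz_mem, not_le.mp h⟩
    have hdist : dist ((WithLp.equiv 2 (Fin d → ℝ)).symm z) x
        = Real.sqrt (∑ i, (z i - x i) ^ 2) := by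
      rw [EuclideanSpace.dist_eq]
      congr 1
      apply Finset.sum_congr rfl
      intro i _
      rw [Real.dist_eq]
      rw [sq_abs]
      rfl
    rw [hdist]
    have h1 : Real.sqrt ((d : ℝ) * s ^ 2) ≤ Real.sqrt (∑ i, (z i - x i) ^ 2) :=
      Real.sqrt_le_sqrt hsum
    have h2 : Real.sqrt ((d : ℝ) * s ^ 2) = Real.sqrt d * s := by
      rw [Real.sqrt_mul (by positivity), Real.sqrt_sq hspos.le]
    have h3 : Real.sqrt d / (5 * (n : ℝ) ^ ((1 : ℝ) / d)) = Real.sqrt d * s := by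
      rw [hs_def]; field_simp
    rw [h3, ← h2]
    exact h1
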